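/- The union of an N-set and a countable set of reals is an N-set (Arbault–Erdős theorem). -/

import Mathlib

open MeasureTheory Filter Set

/-- Distance from a real number to the nearest integer. -/
noncomputable def nintDist (x : ℝ) : ℝ := |x - round x|

/-- `E` is a Dirichlet set. -/
def IsDirichlet (E : Set ℝ) : Prop :=
  ∃ n : ℕ → ℕ, StrictMono n ∧ ∀ x ∈ E, ∀ k : ℕ, nintDist (n k * x) ≤ (1/2) ^ k

/-- `E` is a pseudo-Dirichlet set. -/
def IsPseudoDirichlet (E : Set ℝ) : Prop :=
  ∃ n : ℕ → ℕ, StrictMono n ∧ ∀ x ∈ E, ∀ᶠ k in atTop, nintDist (n k * x) ≤ (1/2) ^ k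

/-- `E` is an Arbault set. -/
def IsArbault (E : Set ℝ) : Prop :=
  ∃ n : ℕ → ℕ, StrictMono n ∧ ∀ x ∈ E,
    Tendsto (fun k => nintDist (n k * x)) atTop (nhds 0)

/-- `E` is an N-set. -/
def IsNSet (E : Set ℝ) : Prop :=
  ∃ a : ℕ → ℝ, (∀ n, 0 ≤ a n) ∧ ¬ Summable a ∧
    ∀ x ∈ E, Summable (fun n => a n * nintDist (n * x))

/-- `s` is an Fσ set: a countable union of closed sets. -/
def IsFsigma (s : Set ℝ) : Prop :=
  ∃ f : ℕ → Set ℝ, (∀ n, IsClosed (f n)) ∧ s = ⋃ n, f n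

section AuxAE

open Finset
open scoped Classical

lemma nintDist_nonneg' (x : ℝ) : 0 ≤ nintDist x := abs_nonneg _

lemma nintDist_le_half' (x : ℝ) : nintDist x ≤ 1/2 := abs_sub_round x

lemma nintDist_le_abs_sub_int (x : ℝ) (m : ℤ) : nintDist x ≤ |x - m| := by
  rcases eq_or_ne m (round x) with h | h
  · simp [nintDist, h]
  · have hne : (m - round x : ℤ) ≠ 0 := sub_ne_zero.2 h
    have h1 : (1 : ℝ) ≤ |(m : ℝ) - round x| := by
      have := Int.one_le_abs hne
      calc (1:ℝ) = ((1:ℤ):ℝ) := by norm_num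
        _ ≤ ((|m - round x| : ℤ) : ℝ) := by exact_mod_cast this
        _ = |(m:ℝ) - round x| := by rw [Int.cast_abs]; push_cast; ring_nf
    have h2 : |x - (round x : ℝ)| ≤ 1/2 := abs_sub_round x
    have h3 : |(m:ℝ) - round x| ≤ |(m:ℝ) - x| + |x - round x| := abs_sub_le _ _ _
    have h4 : |(m:ℝ) - x| = |x - m| := abs_sub_comm _ _
    unfold nintDist
    linarith
lemma nintDist_nat_mul_le (q : ℕ) (z : ℝ) : nintDist ((q:ℝ) * z) ≤ q * nintDist z := by
  refine le_trans (nintDist_le_abs_sub_int _ ((q : ℤ) * round z)) ?_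
  have : (q:ℝ) * z - ((q : ℤ) * round z : ℤ) = (q:ℝ) * (z - round z) := by push_cast; ring
  rw [this, abs_mul, abs_of_nonneg (by positivity : (0:ℝ) ≤ (q:ℝ))]
  exact le_rfl

lemma floor_eq_imp_nintDist_le {k : ℕ} {u v : ℝ}
    (hf : ⌊(2^k : ℝ) * Int.fract u⌋ = ⌊(2^k : ℝ) * Int.fract v⌋) :
    nintDist (u - v) ≤ (1/2)^k := by
  have hpow : (0:ℝ) < 2^k := by positivity
  have h1 : |Int.fract u - Int.fract v| ≤ (1/2)^k := by
    have hu1 : (⌊(2^k : ℝ) * Int.fract u⌋ : ℝ) ≤ (2^k : ℝ) * Int.fract u := Int.floor_le _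
    have hu2 : (2^k : ℝ) * Int.fract u < ⌊(2^k : ℝ) * Int.fract u⌋ + 1 := Int.lt_floor_add_one _
    have hv1 : (⌊(2^k : ℝ) * Int.fract v⌋ : ℝ) ≤ (2^k : ℝ) * Int.fract v := Int.floor_le _
    have hv2 : (2^k : ℝ) * Int.fract v < ⌊(2^k : ℝ) * Int.fract v⌋ + 1 := Int.lt_floor_add_one _
    rw [hf] at hu1 hu2
    have habs : |(2^k : ℝ) * Int.fract u - (2^k : ℝ) * Int.fract v| ≤ 1 := by
      rw [abs_le]; constructor <;> linarith
    have : (2^k:ℝ) * |Int.fract u - Int.fract v| ≤ 1 := by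
      calc (2^k:ℝ) * |Int.fract u - Int.fract v| = |(2^k : ℝ) * Int.fract u - (2^k:ℝ) * Int.fract v| := by
            rw [← mul_sub, abs_mul, abs_of_nonneg hpow.le]
        _ ≤ 1 := habs
    rw [show ((1:ℝ)/2)^k = 1/2^k by rw [one_div_pow]]
    rw [le_div_iff₀ hpow]
    linarith
  refine le_trans (nintDist_le_abs_sub_int _ (⌊u⌋ - ⌊v⌋)) ?_
  have : u - v - ((⌊u⌋ - ⌊v⌋ : ℤ) : ℝ) = Int.fract u - Int.fract v := by
    rw [← Int.self_sub_floor, ← Int.self_sub_floor]; push_cast; ring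
  rw [this]; exact h1

lemma pigeon (y : ℕ → ℝ) (k n : ℕ) :
    ∃ d : ℕ, 1 ≤ d ∧ d ≤ 2^(k*k) ∧
      ∀ j, j < k → nintDist (((d * n : ℕ) : ℝ) * y j) ≤ (1/2)^k := by
  have key : ∀ i i' : ℕ, i < i' → i' ≤ 2^(k*k) →
      (∀ j, j < k → ⌊(2^k:ℝ) * Int.fract ((i':ℝ) * n * y j)⌋ = ⌊(2^k:ℝ) * Int.fract ((i:ℝ) * n * y j)⌋) →
      ∃ d : ℕ, 1 ≤ d ∧ d ≤ 2^(k*k) ∧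
        ∀ j, j < k → nintDist (((d * n : ℕ) : ℝ) * y j) ≤ (1/2)^k := by
    intro i i' hlt hle hfl
    refine ⟨i' - i, by omega, by omega, fun j hj => ?_⟩
    have hcast : (((i' - i) * n : ℕ) : ℝ) * y j = (i':ℝ) * n * y j - (i:ℝ) * n * y j := by
      have : ((i' - i : ℕ) : ℝ) = (i' : ℝ) - i := by
        push_cast [Nat.cast_sub hlt.le]; ring
      push_cast [Nat.cast_sub hlt.le]; ring
    rw [hcast]
    exact floor_eq_imp_nintDist_le (hfl j hj)
  -- the pigeonhole map
  set F : Fin (2^(k*k) + 1) → (Fin k → Fin (2^k)) := fun i j =>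
    ⟨(⌊(2^k : ℝ) * Int.fract ((i:ℕ) * n * y j)⌋).toNat, by
      have h0 : (0:ℝ) ≤ Int.fract ((i:ℕ) * n * y j) := Int.fract_nonneg _
      have h1 : Int.fract (((i:ℕ):ℝ) * n * y j) < 1 := Int.fract_lt_one _
      have hfl : ⌊(2^k : ℝ) * Int.fract ((i:ℕ) * n * y j)⌋ ≥ 0 := Int.floor_nonneg.2 (by positivity)
      rw [Int.toNat_lt hfl]
      rw [Int.floor_lt]
      push_cast
      calc (2^k : ℝ) * Int.fract (((i:ℕ):ℝ) * n * y j) < (2^k:ℝ) * 1 := by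
            apply mul_lt_mul_of_pos_left h1 (by positivity)
        _ = (2^k : ℝ) := by ring⟩ with hF
  have hcard : Fintype.card (Fin k → Fin (2^k)) < Fintype.card (Fin (2^(k*k) + 1)) := by
    simp only [Fintype.card_fun, Fintype.card_fin]
    rw [← pow_mul]
    omega
  obtain ⟨i, i', hne, heq⟩ := Fintype.exists_ne_map_eq_of_card_lt F hcard
  have hfl : ∀ j : Fin k, (⌊(2^k:ℝ) * Int.fract (((i:ℕ):ℝ) * n * y j)⌋) = ⌊(2^k:ℝ) * Int.fract (((i':ℕ):ℝ) * n * y j)⌋ := by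
    intro j
    have := congrFun heq j
    have h2 := congrArg (fun t : Fin (2^k) => (t : ℕ)) this
    simp only [hF] at h2
    have hu : (0:ℤ) ≤ ⌊(2^k:ℝ) * Int.fract (((i:ℕ):ℝ) * n * y j)⌋ :=
      Int.floor_nonneg.2 (mul_nonneg (by positivity) (Int.fract_nonneg _))
    have hv : (0:ℤ) ≤ ⌊(2^k:ℝ) * Int.fract (((i':ℕ):ℝ) * n * y j)⌋ :=
      Int.floor_nonneg.2 (mul_nonneg (by positivity) (Int.fract_nonneg _))
    omega
  rcases lt_or_gt_of_ne (fun hv : (i:ℕ) = (i':ℕ) => hne (Fin.ext hv)) with hlt | hgt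
  · exact key i i' hlt (by omega) (fun j hj => (hfl ⟨j, hj⟩).symm)
  · exact key i' i hgt (by omega) (fun j hj => hfl ⟨j, hj⟩)

end AuxAE

section CutAE

open Finset
open scoped Classical

variable (a : ℕ → ℝ)

def TailProp : Prop := ∀ (c : ℕ) (R : ℝ), ∃ m, R ≤ ∑ n ∈ Finset.Ico c m, a n

variable (h : TailProp a)

noncomputable def cutAE : ℕ → ℕ
  | 0 => 1
  | k+1 => Nat.find (h (cutAE k) ((2:ℝ)^(k*k)))

lemma cutAE_zero : cutAE a h 0 = 1 := rfl

lemma cutAE_spec (k : ℕ) :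
    (2:ℝ)^(k*k) ≤ ∑ n ∈ Finset.Ico (cutAE a h k) (cutAE a h (k+1)), a n := by
  have := Nat.find_spec (h (cutAE a h k) ((2:ℝ)^(k*k)))
  simpa [cutAE] using this

lemma cutAE_lt (k : ℕ) : cutAE a h k < cutAE a h (k+1) := by
  by_contra hc
  push_neg at hc
  have h1 := cutAE_spec a h k
  rw [Finset.Ico_eq_empty (by omega)] at h1
  simp at h1
  have : (0:ℝ) < 2^(k*k) := by positivity
  linarith

lemma cutAE_strictMono : StrictMono (cutAE a h) :=
  strictMono_nat_of_lt_succ (cutAE_lt a h)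

lemma cutAE_ge (k : ℕ) : k + 1 ≤ cutAE a h k := by
  induction k with
  | zero => simp [cutAE]
  | succ k ih => have := cutAE_lt a h k; omega

lemma cutAE_blocksum_le (ha1 : ∀ n, a n ≤ 1) (k : ℕ) :
    ∑ n ∈ Finset.Ico (cutAE a h k) (cutAE a h (k+1)), a n ≤ (2:ℝ)^(k*k) + 1 := by
  set c := cutAE a h k
  have hm : c < cutAE a h (k+1) := cutAE_lt a h k
  have hfind : cutAE a h (k+1) = Nat.find (h c ((2:ℝ)^(k*k))) := by simp [cutAE, c]
  set m := cutAE a h (k+1) with hmdef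
  have hlt' : m - 1 < Nat.find (h c ((2:ℝ)^(k*k))) := by rw [← hfind]; omega
  have hmin : ¬ ((2:ℝ)^(k*k) ≤ ∑ n ∈ Finset.Ico c (m-1), a n) :=
    Nat.find_min (h c ((2:ℝ)^(k*k))) hlt'
  push_neg at hmin
  have hsplit : ∑ n ∈ Finset.Ico c m, a n = ∑ n ∈ Finset.Ico c (m-1), a n + a (m-1) := by
    have h1 : c ≤ m - 1 := by omega
    have := Finset.sum_Ico_succ_top h1 a
    rw [show m - 1 + 1 = m by omega] at this
    exact this
  rw [hsplit]
  have := ha1 (m-1)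
  linarith

noncomputable def idxAE (n : ℕ) : ℕ :=
  Nat.find (⟨n, by have := cutAE_ge a h (n+1); omega⟩ : ∃ k, n < cutAE a h (k+1))

lemma idxAE_spec (n : ℕ) : n < cutAE a h (idxAE a h n + 1) :=
  Nat.find_spec (⟨n, by have := cutAE_ge a h (n+1); omega⟩ : ∃ k, n < cutAE a h (k+1))

lemma idxAE_le (n : ℕ) : idxAE a h n ≤ n := by
  unfold idxAE
  exact Nat.find_le (by have := cutAE_ge a h (n+1); omega)

lemma idxAE_eq {k n : ℕ} (h1 : cutAE a h k ≤ n) (h2 : n < cutAE a h (k+1)) :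
    idxAE a h n = k := by
  have hle : idxAE a h n ≤ k := by unfold idxAE; exact Nat.find_le h2
  rcases eq_or_lt_of_le hle with he | hlt
  · exact he
  · exfalso
    have := idxAE_spec a h n
    have hmono : cutAE a h (idxAE a h n + 1) ≤ cutAE a h k :=
      (cutAE_strictMono a h).monotone (by omega)
    omega

lemma idxAE_lower {n : ℕ} (hn : 1 ≤ n) : cutAE a h (idxAE a h n) ≤ n := by
  rcases Nat.eq_zero_or_pos (idxAE a h n) with h0 | hpos
  · rw [h0, cutAE_zero]; exact hn
  · have := Nat.find_min (⟨n, by have := cutAE_ge a h (n+1); omega⟩ : ∃ k, n < cutAE a h (k+1))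
      (show idxAE a h n - 1 < idxAE a h n by omega)
    push_neg at this
    calc cutAE a h (idxAE a h n) = cutAE a h ((idxAE a h n - 1) + 1) := by congr 1; omega
      _ ≤ n := this

lemma idxAE_zero : idxAE a h 0 = 0 := by
  have : idxAE a h 0 ≤ 0 := by
    unfold idxAE
    exact Nat.find_le (show 0 < cutAE a h 1 by have := cutAE_ge a h 1; omega)
  omega

end CutAE

section MainAE

open Finset
open scoped Classical

lemma mainAE (E : Set ℝ) (y : ℕ → ℝ) (a : ℕ → ℝ) (ha0 : ∀ n, 0 ≤ a n) (ha1 : ∀ n, a n ≤ 1)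
    (hdiv : ¬ Summable a) (hsum : ∀ x ∈ E, Summable fun n => a n * nintDist (n * x)) :
    IsNSet (E ∪ Set.range y) := by
  -- tails of `a` have unbounded partial sums
  have h : TailProp a := by
    intro c R
    by_contra hc
    push_neg at hc
    apply hdiv
    have hshift : Summable (fun n => a (n + c)) := by
      apply summable_of_sum_range_le (c := R) (fun n => ha0 _)
      intro t
      have := hc (c + t)
      rw [Finset.sum_Ico_eq_sum_range] at this
      simp only [Nat.add_sub_cancel_left] at this
      calc ∑ i ∈ Finset.range t, a (i + c) = ∑ i ∈ Finset.range t, a (c + i) := by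
            apply Finset.sum_congr rfl; intro i _; rw [Nat.add_comm]
        _ ≤ R := this.le
    exact (summable_nat_add_iff c).1 hshift
  set e : ℕ → ℕ := cutAE a h with hedef
  set K : ℕ → ℕ := idxAE a h with hKdef
  have hpig : ∀ n, ∃ dd : ℕ, 1 ≤ dd ∧ dd ≤ 2^(K n * K n) ∧
      ∀ j, j < K n → nintDist (((dd * n : ℕ) : ℝ) * y j) ≤ ((1:ℝ)/2)^(K n) :=
    fun n => pigeon y (K n) n
  choose d hd1 hd2 hd3 using hpig
  set φ : ℕ → ℕ := fun n => d n * n with hφdef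
  set c : ℕ → ℝ := fun n => a n / (2:ℝ)^(K n * K n) with hcdef
  set b : ℕ → ℝ := fun m => ∑ n ∈ (Finset.range (m+1)).filter (fun n => φ n = m), c n with hbdef
  have hc0 : ∀ n, 0 ≤ c n := by
    intro n; rw [hcdef]; exact div_nonneg (ha0 n) (by positivity)
  have hb0 : ∀ m, 0 ≤ b m := by
    intro m; rw [hbdef]; exact Finset.sum_nonneg fun n _ => hc0 n
  have hφge : ∀ n, n ≤ φ n := by
    intro n; rw [hφdef]
    calc n = 1 * n := (one_mul n).symm
      _ ≤ d n * n := Nat.mul_le_mul_right n (hd1 n)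
  -- core identity
  have CI : ∀ (w : ℕ → ℝ) (M : ℕ), ∑ m ∈ Finset.range M, b m * w m
      = ∑ n ∈ Finset.range M, (if φ n < M then c n * w (φ n) else 0) := by
    intro w M
    have step1 : ∀ m ∈ Finset.range M,
        b m * w m = ∑ n ∈ Finset.range M, (if φ n = m then c n * w (φ n) else 0) := by
      intro m hm
      rw [Finset.mem_range] at hm
      have hb : b m = ∑ n ∈ Finset.range M, (if φ n = m then c n else 0) := by
        rw [hbdef]
        simp only []
        rw [Finset.sum_filter]
        apply Finset.sum_subset
        · intro x hx
          rw [Finset.mem_range] at hx ⊢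
          omega
        · intro x hx hnx
          rw [Finset.mem_range] at hx hnx
          have hxm : ¬ (φ x = m) := by
            intro hcontra
            have := hφge x
            omega
          simp [hxm]
      rw [hb, Finset.sum_mul]
      apply Finset.sum_congr rfl
      intro n _
      by_cases hcase : φ n = m
      · simp [hcase]
      · simp [hcase]
    rw [Finset.sum_congr rfl step1, Finset.sum_comm]
    apply Finset.sum_congr rfl
    intro n _
    rw [Finset.sum_ite_eq (Finset.range M) (φ n) (fun _ => c n * w (φ n))]
    simp [Finset.mem_range]
  -- block bounds for c
  have hcblock : ∀ k, ∑ n ∈ Finset.Ico (e k) (e (k+1)), c n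
      = (∑ n ∈ Finset.Ico (e k) (e (k+1)), a n) / (2:ℝ)^(k*k) := by
    intro k
    rw [Finset.sum_div]
    apply Finset.sum_congr rfl
    intro n hn
    rw [Finset.mem_Ico] at hn
    have hKn : K n = k := idxAE_eq a h hn.1 hn.2
    rw [hcdef]; simp only []; rw [hKn]
  have hblocklow : ∀ k, 1 ≤ ∑ n ∈ Finset.Ico (e k) (e (k+1)), c n := by
    intro k
    rw [hcblock k, le_div_iff₀ (by positivity)]
    have := cutAE_spec a h k
    rw [← hedef] at this
    linarith
  have hblockhigh : ∀ k, ∑ n ∈ Finset.Ico (e k) (e (k+1)), c n ≤ 2 := by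
    intro k
    rw [hcblock k, div_le_iff₀ (by positivity)]
    have h1 := cutAE_blocksum_le a h ha1 k
    rw [← hedef] at h1
    have h2 : (1:ℝ) ≤ 2^(k*k) := one_le_pow₀ (by norm_num)
    linarith
  -- lower bound for partial sums of c
  have hcdiv : ∀ k : ℕ, (k+1 : ℝ) ≤ ∑ n ∈ Finset.Ico (e 0) (e (k+1)), c n := by
    intro k
    induction k with
    | zero => simpa using hblocklow 0
    | succ k ih =>
      have hmono := cutAE_strictMono a h
      have hc1 : e 0 ≤ e (k+1) := by
        rw [hedef]; exact (hmono.monotone (by omega))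
      have hc2 : e (k+1) ≤ e (k+2) := by
        rw [hedef]; exact (hmono.monotone (by omega))
      rw [← Finset.sum_Ico_consecutive c hc1 hc2]
      have := hblocklow (k+1)
      push_cast
      push_cast at ih
      linarith
  -- fiber bound
  have hKe : ∀ n k, K n = k → n ∈ insert 0 (Finset.Ico (e k) (e (k+1))) := by
    intro n k hk
    rcases Nat.eq_zero_or_pos n with h0 | hpos
    · simp [h0]
    · have h1 : e (K n) ≤ n := idxAE_lower a h hpos
      have h2 : n < e (K n + 1) := idxAE_spec a h n
      rw [hk] at h1 h2
      simp [Finset.mem_Ico, h1, h2]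
  have hc0val : c 0 ≤ 1 := by
    rw [hcdef]; simp only []
    rw [hKdef]
    rw [idxAE_zero]
    simpa using ha1 0
  have hfiber : ∀ (M k : ℕ), ∑ n ∈ (Finset.range M).filter (fun n => K n = k), c n ≤ 3 := by
    intro M k
    have hsubset : (Finset.range M).filter (fun n => K n = k) ⊆ insert 0 (Finset.Ico (e k) (e (k+1))) := by
      intro n hn
      rw [Finset.mem_filter] at hn
      exact hKe n k hn.2
    calc ∑ n ∈ (Finset.range M).filter (fun n => K n = k), c n
        ≤ ∑ n ∈ insert 0 (Finset.Ico (e k) (e (k+1))), c n :=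
          Finset.sum_le_sum_of_subset_of_nonneg hsubset (fun i _ _ => hc0 i)
      _ = c 0 + ∑ n ∈ Finset.Ico (e k) (e (k+1)), c n := by
          rw [Finset.sum_insert]
          rw [Finset.mem_Ico]
          have : 1 ≤ e k := by rw [hedef]; have := cutAE_ge a h k; omega
          omega
      _ ≤ 1 + 2 := add_le_add hc0val (hblockhigh k)
      _ = 3 := by norm_num
  -- divergence of b
  have hbdiv : ¬ Summable b := by
    intro hsb
    have hcs : Summable c := by
      apply summable_of_sum_range_le (c := ∑' m, b m) hc0
      intro M
      set M' := ((Finset.range M).sup φ) + M + 1 with hM'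
      have hstep : ∑ n ∈ Finset.range M, c n
          ≤ ∑ n ∈ Finset.range M', (if φ n < M' then c n * 1 else 0) := by
        have heq : ∀ n ∈ Finset.range M, c n = (if φ n < M' then c n * 1 else 0) := by
          intro n hn
          have hφn : φ n ≤ (Finset.range M).sup φ := Finset.le_sup hn
          rw [if_pos (by omega), mul_one]
        rw [Finset.sum_congr rfl heq]
        apply Finset.sum_le_sum_of_subset_of_nonneg
        · apply Finset.range_subset_range.2; omega
        · intro i _ _
          split
          · rw [mul_one]; exact hc0 i
          · exact le_rfl
      calc ∑ n ∈ Finset.range M, c n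
          ≤ ∑ n ∈ Finset.range M', (if φ n < M' then c n * 1 else 0) := hstep
        _ = ∑ m ∈ Finset.range M', b m * 1 := (CI (fun _ => 1) M').symm
        _ = ∑ m ∈ Finset.range M', b m := by simp
        _ ≤ ∑' m, b m := Summable.sum_le_tsum _ (fun i _ => hb0 i) hsb
    obtain ⟨k, hk⟩ := exists_nat_gt (∑' n, c n)
    have h1 := hcdiv k
    have h2 : ∑ n ∈ Finset.Ico (e 0) (e (k+1)), c n ≤ ∑' n, c n := by
      apply Summable.sum_le_tsum _ (fun i _ => hc0 i) hcs
    have h3 : (k:ℝ) < k + 1 := by linarith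
    linarith
  -- the witness
  refine ⟨b, hb0, hbdiv, ?_⟩
  rintro x (hxE | ⟨j, rfl⟩)
  · -- x ∈ E
    have hsx := hsum x hxE
    apply summable_of_sum_range_le (c := ∑' n, a n * nintDist (n * x))
      (fun m => mul_nonneg (hb0 m) (nintDist_nonneg' _))
    intro M
    rw [CI (fun m => nintDist (m * x)) M]
    have hterm : ∀ n ∈ Finset.range M,
        (if φ n < M then c n * nintDist ((φ n : ℝ) * x) else 0) ≤ a n * nintDist ((n:ℝ) * x) := by
      intro n _
      split
      · have h1 : nintDist (((φ n : ℕ):ℝ) * x) ≤ (d n : ℝ) * nintDist ((n:ℝ)*x) := by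
          have hc : ((φ n : ℕ) : ℝ) * x = (d n : ℝ) * ((n:ℝ) * x) := by
            rw [hφdef]; push_cast; ring
          rw [hc]; exact nintDist_nat_mul_le (d n) _
        have hdle : (d n : ℝ) ≤ (2:ℝ)^(K n * K n) := by
          have := hd2 n
          calc (d n : ℝ) ≤ ((2^(K n * K n) : ℕ) : ℝ) := by exact_mod_cast this
            _ = (2:ℝ)^(K n * K n) := by push_cast; ring
        have ht0 : 0 ≤ nintDist ((n:ℝ)*x) := nintDist_nonneg' _
        calc c n * nintDist ((φ n : ℝ) * x) ≤ c n * ((d n : ℝ) * nintDist ((n:ℝ)*x)) :=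
              mul_le_mul_of_nonneg_left h1 (hc0 n)
          _ ≤ c n * ((2:ℝ)^(K n * K n) * nintDist ((n:ℝ)*x)) := by
              apply mul_le_mul_of_nonneg_left _ (hc0 n)
              exact mul_le_mul_of_nonneg_right hdle ht0
          _ = a n * nintDist ((n:ℝ)*x) := by
              rw [hcdef]; simp only []
              field_simp
      · exact mul_nonneg (ha0 n) (nintDist_nonneg' _)
    calc ∑ n ∈ Finset.range M, (if φ n < M then c n * nintDist ((φ n : ℝ) * x) else 0)
        ≤ ∑ n ∈ Finset.range M, a n * nintDist ((n:ℝ) * x) := Finset.sum_le_sum hterm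
      _ ≤ ∑' n, a n * nintDist ((n:ℝ) * x) :=
          Summable.sum_le_tsum _ (fun i _ => mul_nonneg (ha0 i) (nintDist_nonneg' _)) hsx
  · -- x = y j
    set hj : ℕ → ℝ := fun k => if j < k then ((1:ℝ)/2)^k else 1/2 with hhjdef
    have hj0 : ∀ k, 0 ≤ hj k := by
      intro k; rw [hhjdef]; simp only []
      split
      · positivity
      · norm_num
    apply summable_of_sum_range_le (c := 3 * ((j+1) * (1/2) + 2))
      (fun m => mul_nonneg (hb0 m) (nintDist_nonneg' _))
    intro M
    rw [CI (fun m => nintDist (m * y j)) M]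
    have hterm : ∀ n ∈ Finset.range M,
        (if φ n < M then c n * nintDist ((φ n : ℝ) * y j) else 0) ≤ c n * hj (K n) := by
      intro n _
      split
      · apply mul_le_mul_of_nonneg_left _ (hc0 n)
        rw [hhjdef]; simp only []
        split
        · rename_i hlt
          have := hd3 n j hlt
          rw [hφdef]
          exact this
        · exact nintDist_le_half' _
      · exact mul_nonneg (hc0 n) (hj0 _)
    have hmaps : ∀ n ∈ Finset.range M, K n ∈ Finset.range M := by
      intro n hn
      rw [Finset.mem_range] at hn ⊢
      have := idxAE_le a h n
      rw [← hKdef] at this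
      omega
    calc ∑ n ∈ Finset.range M, (if φ n < M then c n * nintDist ((φ n : ℝ) * y j) else 0)
        ≤ ∑ n ∈ Finset.range M, c n * hj (K n) := Finset.sum_le_sum hterm
      _ = ∑ k ∈ Finset.range M, ∑ n ∈ (Finset.range M).filter (fun n => K n = k), c n * hj (K n) :=
          (Finset.sum_fiberwise_of_maps_to hmaps _).symm
      _ ≤ ∑ k ∈ Finset.range M, 3 * hj k := by
          apply Finset.sum_le_sum
          intro k _
          have : ∑ n ∈ (Finset.range M).filter (fun n => K n = k), c n * hj (K n)
              = (∑ n ∈ (Finset.range M).filter (fun n => K n = k), c n) * hj k := by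
            rw [Finset.sum_mul]
            apply Finset.sum_congr rfl
            intro n hn
            rw [Finset.mem_filter] at hn
            rw [hn.2]
          rw [this]
          exact mul_le_mul_of_nonneg_right (hfiber M k) (hj0 k)
      _ = 3 * ∑ k ∈ Finset.range M, hj k := by rw [Finset.mul_sum]
      _ ≤ 3 * ((j+1) * (1/2) + 2) := by
          have hsum2 : ∑ k ∈ Finset.range M, hj k ≤ (j+1) * (1/2) + 2 := by
            have hle : ∀ k ∈ Finset.range M,
                hj k ≤ (if k ≤ j then (1/2:ℝ) else 0) + ((1:ℝ)/2)^k := by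
              intro k _
              rw [hhjdef]; simp only []
              by_cases hkj : j < k
              · rw [if_pos hkj, if_neg (by omega)]
                simp
              · rw [if_neg hkj, if_pos (by omega)]
                have : (0:ℝ) ≤ ((1:ℝ)/2)^k := by positivity
                linarith
            calc ∑ k ∈ Finset.range M, hj k
                ≤ ∑ k ∈ Finset.range M, ((if k ≤ j then (1/2:ℝ) else 0) + ((1:ℝ)/2)^k) :=
                  Finset.sum_le_sum hle
              _ = (∑ k ∈ Finset.range M, (if k ≤ j then (1/2:ℝ) else 0))
                  + ∑ k ∈ Finset.range M, ((1:ℝ)/2)^k := Finset.sum_add_distrib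
              _ ≤ (j+1) * (1/2) + 2 := by
                  have hA : ∑ k ∈ Finset.range M, (if k ≤ j then (1/2:ℝ) else 0) ≤ (j+1) * (1/2) := by
                    rw [← Finset.sum_filter]
                    rw [Finset.sum_const]
                    have hcard : ((Finset.range M).filter (fun k => k ≤ j)).card ≤ j + 1 := by
                      calc ((Finset.range M).filter (fun k => k ≤ j)).card
                          ≤ (Finset.range (j+1)).card := by
                            apply Finset.card_le_card
                            intro k hk
                            rw [Finset.mem_filter] at hk
                            rw [Finset.mem_range]
                            omega
                        _ = j + 1 := Finset.card_range _
                    rw [nsmul_eq_mul]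
                    calc (((Finset.range M).filter (fun k => k ≤ j)).card : ℝ) * (1/2)
                        ≤ ((j+1 : ℕ) : ℝ) * (1/2) := by
                          apply mul_le_mul_of_nonneg_right _ (by norm_num)
                          exact_mod_cast hcard
                      _ = (j+1) * (1/2) := by push_cast; ring
                  have hB : ∑ k ∈ Finset.range M, ((1:ℝ)/2)^k ≤ 2 := by
                    have hg := geom_sum_eq (show ((1:ℝ)/2) ≠ 1 by norm_num) M
                    rw [hg]
                    have hp : (0:ℝ) ≤ ((1:ℝ)/2)^M := by positivity
                    have : (((1:ℝ)/2)^M - 1)/((1:ℝ)/2 - 1) = 2 - 2*((1:ℝ)/2)^M := by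
                      field_simp
                      ring
                    rw [this]
                    linarith
                  linarith
          linarith

end MainAE

section FinalAE

open Finset
open scoped Classical

lemma prepAE (E : Set ℝ) (hE : IsNSet E) :
    ∃ a : ℕ → ℝ, (∀ n, 0 ≤ a n) ∧ (∀ n, a n ≤ 1) ∧ ¬ Summable a ∧
      ∀ x ∈ E, Summable (fun n => a n * nintDist (n * x)) := by
  obtain ⟨a₀, ha₀, hdiv₀, hsum₀⟩ := hE
  by_cases hmin : Summable (fun n => min (a₀ n) 1)
  · refine ⟨fun n => if 1 ≤ a₀ n then 1 else 0, ?_, ?_, ?_, ?_⟩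
    · intro n; simp only []; split <;> norm_num
    · intro n; simp only []; split <;> norm_num
    · intro hsb
      apply hdiv₀
      have htend := hsb.tendsto_atTop_zero
      have hev : ∀ᶠ n in Filter.atTop, (if 1 ≤ a₀ n then (1:ℝ) else 0) < 1 := by
        have := htend.eventually (eventually_lt_nhds (show (0:ℝ) < 1 by norm_num))
        exact this
      obtain ⟨m, hm⟩ := Filter.eventually_atTop.1 hev
      have hlt : ∀ n ≥ m, a₀ n < 1 := by
        intro n hn
        have := hm n hn
        by_contra hc
        push_neg at hc
        rw [if_pos hc] at this
        linarith
      have hshift : Summable (fun n => a₀ (n + m)) := by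
        have h1 : Summable (fun n => min (a₀ (n + m)) 1) := (summable_nat_add_iff m).2 hmin
        apply h1.congr
        intro n
        exact min_eq_left (hlt (n + m) (by omega)).le
      exact (summable_nat_add_iff m).1 hshift
    · intro x hx
      apply Summable.of_nonneg_of_le _ _ (hsum₀ x hx)
      · intro n
        apply mul_nonneg _ (nintDist_nonneg' _)
        simp only []; split <;> norm_num
      · intro n
        simp only []
        by_cases hc : 1 ≤ a₀ n
        · rw [if_pos hc, one_mul]
          exact le_mul_of_one_le_left (nintDist_nonneg' _) hc
        · rw [if_neg hc, zero_mul]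
          exact mul_nonneg (ha₀ n) (nintDist_nonneg' _)
  · refine ⟨fun n => min (a₀ n) 1, ?_, ?_, hmin, ?_⟩
    · intro n; exact le_min (ha₀ n) (by norm_num)
    · intro n; exact min_le_right _ _
    · intro x hx
      apply Summable.of_nonneg_of_le _ _ (hsum₀ x hx)
      · intro n; exact mul_nonneg (le_min (ha₀ n) (by norm_num)) (nintDist_nonneg' _)
      · intro n; exact mul_le_mul_of_nonneg_right (min_le_left _ _) (nintDist_nonneg' _)

end FinalAE


theorem stmt17 (E S : Set ℝ) (hE : IsNSet E) (hS : S.Countable) :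
    IsNSet (E ∪ S) := by
  obtain ⟨a, ha0, ha1, hdiv, hsum⟩ := prepAE E hE
  obtain ⟨y, hy⟩ : ∃ y : ℕ → ℝ, S ⊆ Set.range y := by
    rcases Set.eq_empty_or_nonempty S with hSe | hSne
    · exact ⟨fun _ => 0, by rw [hSe]; exact Set.empty_subset _⟩
    · obtain ⟨f, hf⟩ := hS.exists_eq_range hSne
      exact ⟨f, hf.le⟩
  obtain ⟨b, hb0, hbdiv, hbsum⟩ := mainAE E y a ha0 ha1 hdiv hsum
  refine ⟨b, hb0, hbdiv, ?_⟩
  rintro x (hx | hx)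
  · exact hbsum x (Or.inl hx)
  · exact hbsum x (Or.inr (hy hx))
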